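/- Let G^{(1)},...,G^{(L)} ∈ ℝ^{d×d} be symmetric matrices and suppose each G^{(l)} has a diagonal block (indexed by a set S_{s(l)} depending on its label) whose smallest singular value is at least σ > 0, while all other blocks vanish. Then the smallest singular value of the mode-1 matricization of the tensor with slices G^{(l)} satisfies σ_min²(M₁(G)) = λ_min(Σ_l G^{(l)}(G^{(l)})ᵀ) ≥ L_min·σ², where L_min is the minimal number of layers per label, provided each label's block position is occupied by at least L_min layers covering all coordinates. -/

import Mathlib

open Matrix

/-- Euclidean norm of a finitely supported real vector. -/
noncomputable def vecEnorm {α : Type*} [Fintype α] (x : α → ℝ) : ℝ :=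
  Real.sqrt (∑ i, x i ^ 2)

theorem stmt_7 (d L M : ℕ)
    (G : Fin L → Matrix (Fin d) (Fin d) ℝ)
    (hsym : ∀ l, (G l).IsSymm)
    (S : Fin d → Fin M) (s : Fin L → Fin M)
    (σ : ℝ) (hσ : 0 < σ)
    (hsupp : ∀ l i j, (S i ≠ s l ∨ S j ≠ s l) → G l i j = 0)
    (hblock : ∀ l (x : Fin d → ℝ), (∀ i, S i ≠ s l → x i = 0) →
      σ * vecEnorm x ≤ vecEnorm ((G l).mulVec x))
    (Lmin : ℕ)
    (hLmin : ∀ m : Fin M, Lmin ≤ (Finset.univ.filter fun l => s l = m).card)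
    (hcover : ∀ i : Fin d, ∃ l, s l = S i)
    (M1 : Matrix (Fin d) (Fin d × Fin L) ℝ)
    (hM1 : ∀ i j l, M1 i (j, l) = G l i j)
    (hH : (∑ l, G l * (G l)ᵀ).IsHermitian) :
    M1 * M1ᵀ = ∑ l, G l * (G l)ᵀ ∧
    ∀ i, (Lmin : ℝ) * σ ^ 2 ≤ hH.eigenvalues i := by
  constructor
  · ext i j
    simp only [Matrix.mul_apply, Matrix.sum_apply, Matrix.transpose_apply]
    rw [Fintype.sum_prod_type, Finset.sum_comm]
    congr 1; ext l; congr 1; ext k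
    rw [hM1, hM1]
  · intro i
    set v : Fin d → ℝ := ⇑(hH.eigenvectorBasis i) with hv
    have hvnorm : ∑ j, v j ^ 2 = 1 := by
      have h1 : ‖hH.eigenvectorBasis i‖ = 1 := hH.eigenvectorBasis.orthonormal.1 i
      rw [EuclideanSpace.norm_eq] at h1
      have h2 : ∀ j, v j = hH.eigenvectorBasis i j := fun j => rfl
      have := Real.sqrt_eq_one.mp h1
      calc ∑ j, v j ^ 2 = ∑ j, ‖hH.eigenvectorBasis i j‖ ^ 2 := by
            refine Finset.sum_congr rfl fun j _ => ?_
            rw [h2, Real.norm_eq_abs, sq_abs]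
        _ = 1 := this
    have heig : (∑ l, G l * (G l)ᵀ) *ᵥ v = hH.eigenvalues i • v :=
      hH.mulVec_eigenvectorBasis i
    have hquad : hH.eigenvalues i = ∑ l, ∑ k, ((G l) *ᵥ v) k ^ 2 := by
      have hdot : v ⬝ᵥ ((∑ l, G l * (G l)ᵀ) *ᵥ v) = hH.eigenvalues i := by
        rw [heig, dotProduct_smul]
        have : v ⬝ᵥ v = 1 := by rw [← hvnorm]; simp [dotProduct, sq]
        simp [this]
      have hsumv : (∑ l, G l * (G l)ᵀ) *ᵥ v = ∑ l, (G l * (G l)ᵀ) *ᵥ v := by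
        funext k
        simp [Matrix.mulVec, dotProduct, Matrix.sum_apply, Finset.sum_mul]
        rw [Finset.sum_comm]
      have hds : v ⬝ᵥ (∑ l, (G l * (G l)ᵀ) *ᵥ v) = ∑ l, v ⬝ᵥ ((G l * (G l)ᵀ) *ᵥ v) := by
        simp only [dotProduct, Finset.sum_apply, Finset.mul_sum]
        rw [Finset.sum_comm]
      rw [← hdot, hsumv, hds]
      refine Finset.sum_congr rfl fun l _ => ?_
      rw [← Matrix.mulVec_mulVec, Matrix.dotProduct_mulVec, ← Matrix.mulVec_transpose,
        (hsym l).eq]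
      simp [dotProduct, sq]
    set xm : Fin M → Fin d → ℝ := fun m j => if S j = m then v j else 0 with hxm
    have hGx : ∀ l, G l *ᵥ v = G l *ᵥ xm (s l) := by
      intro l
      funext k
      simp only [Matrix.mulVec, dotProduct, hxm]
      refine Finset.sum_congr rfl fun j _ => ?_
      by_cases h : S j = s l
      · simp [h]
      · simp [h, hsupp l k j (Or.inr h)]
    have hsq : ∀ l, σ ^ 2 * ∑ j, xm (s l) j ^ 2 ≤ ∑ k, ((G l) *ᵥ v) k ^ 2 := by
      intro l
      have hx0 : ∀ j, S j ≠ s l → xm (s l) j = 0 := by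
        intro j h; simp [hxm, h]
      have hb := hblock l (xm (s l)) hx0
      rw [← hGx l] at hb
      have ha : (0:ℝ) ≤ ∑ j, xm (s l) j ^ 2 := Finset.sum_nonneg fun _ _ => sq_nonneg _
      have hbnn : (0:ℝ) ≤ ∑ k, ((G l) *ᵥ v) k ^ 2 := Finset.sum_nonneg fun _ _ => sq_nonneg _
      unfold vecEnorm at hb
      have hmul := mul_self_le_mul_self
        (mul_nonneg hσ.le (Real.sqrt_nonneg _)) hb
      calc σ ^ 2 * ∑ j, xm (s l) j ^ 2
          = (σ * Real.sqrt (∑ j, xm (s l) j ^ 2)) * (σ * Real.sqrt (∑ j, xm (s l) j ^ 2)) := by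
            rw [mul_mul_mul_comm, Real.mul_self_sqrt ha, sq]
        _ ≤ Real.sqrt (∑ k, ((G l) *ᵥ v) k ^ 2) * Real.sqrt (∑ k, ((G l) *ᵥ v) k ^ 2) := hmul
        _ = ∑ k, ((G l) *ᵥ v) k ^ 2 := Real.mul_self_sqrt hbnn
    have hsum : (Lmin : ℝ) ≤ ∑ l, ∑ j, xm (s l) j ^ 2 := by
      have hswap : ∑ l, ∑ j, xm (s l) j ^ 2
          = ∑ j, ((Finset.univ.filter fun l => s l = S j).card : ℝ) * v j ^ 2 := by
        rw [Finset.sum_comm]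
        refine Finset.sum_congr rfl fun j _ => ?_
        have hpt : ∀ l : Fin L, xm (s l) j ^ 2 = if s l = S j then v j ^ 2 else 0 := by
          intro l; simp only [hxm]
          by_cases h : S j = s l
          · rw [if_pos h, if_pos h.symm]
          · rw [if_neg h, if_neg (fun h' => h h'.symm)]
            simp
        simp_rw [hpt]
        rw [← Finset.sum_filter, Finset.sum_const, nsmul_eq_mul]
      rw [hswap]
      calc (Lmin : ℝ) = ∑ j, (Lmin : ℝ) * v j ^ 2 := by
            rw [← Finset.mul_sum, hvnorm, mul_one]
        _ ≤ ∑ j, ((Finset.univ.filter fun l => s l = S j).card : ℝ) * v j ^ 2 := by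
            refine Finset.sum_le_sum fun j _ => ?_
            exact mul_le_mul_of_nonneg_right (Nat.cast_le.mpr (hLmin (S j))) (sq_nonneg _)
    calc (Lmin : ℝ) * σ ^ 2 = σ ^ 2 * (Lmin : ℝ) := by ring
      _ ≤ σ ^ 2 * ∑ l, ∑ j, xm (s l) j ^ 2 :=
          mul_le_mul_of_nonneg_left hsum (sq_nonneg σ)
      _ = ∑ l, σ ^ 2 * ∑ j, xm (s l) j ^ 2 := Finset.mul_sum _ _ _
      _ ≤ ∑ l, ∑ k, ((G l) *ᵥ v) k ^ 2 := Finset.sum_le_sum fun l _ => hsq l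
      _ = hH.eigenvalues i := hquad.symm
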